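/- In the biased majority model on the torus T_{n,n} with von Neumann neighborhood and random initial coloring with p_b = ω(n^{-1}), with probability 1 - o(1) the initial generation contains some diagonal pair {(2i,2j),(2i+1,2j+1)} both of whose cells are blue, and consequently blue survives in all subsequent generations. -/

import Mathlib

open Filter

/-- Number of blue cells among the four von Neumann neighbors of `v` in the torus. -/
def vnCount (n : ℕ) (g : ZMod n × ZMod n → Bool) (v : ZMod n × ZMod n) : ℕ :=
  (if g (v.1 + 1, v.2) = true then 1 else 0) + (if g (v.1 - 1, v.2) = true then 1 else 0) +
    (if g (v.1, v.2 + 1) = true then 1 else 0) + (if g (v.1, v.2 - 1) = true then 1 else 0)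

/-- One synchronous step of the majority model on the torus `T_{n,n}` with von Neumann
neighborhood: strict majority among the 4 neighbors, ties conserve the current color. -/
def torusMajStep (n : ℕ) (g : ZMod n × ZMod n → Bool) : ZMod n × ZMod n → Bool :=
  fun v => if 2 < vnCount n g v then true else if vnCount n g v < 2 then false else g v

/-- One synchronous step of the biased majority model on the torus `T_{n,n}` with
von Neumann neighborhood: a cell becomes blue iff at least 2 of its 4 neighbors are blue. -/
def torusBMajStep (n : ℕ) (g : ZMod n × ZMod n → Bool) : ZMod n × ZMod n → Bool :=
  fun v => decide (2 ≤ vnCount n g v)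

/-- Moore (8-)adjacency on the torus `T_{n,n}`. -/
def mooreAdj (n : ℕ) (u v : ZMod n × ZMod n) : Prop :=
  u ≠ v ∧ (u.1 = v.1 ∨ u.1 = v.1 + 1 ∨ v.1 = u.1 + 1) ∧
    (u.2 = v.2 ∨ u.2 = v.2 + 1 ∨ v.2 = u.2 + 1)

/-- The Moore (8-)adjacency graph on the torus `T_{n,n}`. -/
def mooreGraph (n : ℕ) : SimpleGraph (ZMod n × ZMod n) where
  Adj := mooreAdj n
  symm := by
    constructor
    rintro u v ⟨h0, h1, h2⟩
    exact ⟨Ne.symm h0, by tauto, by tauto⟩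
  loopless := ⟨fun v h => h.1 rfl⟩

open scoped Classical in
/-- Probability, under the product measure where each vertex is blue (`true`)
independently with probability `p`, of the event `E`. -/
noncomputable def pr {α : Type*} [Fintype α] [DecidableEq α] (p : ℝ)
    (E : (α → Bool) → Prop) : ℝ :=
  ∑ g : α → Bool, if E g then (∏ v, if g v = true then p else 1 - p) else 0



section general
variable {α : Type*} [Fintype α] [DecidableEq α] {p : ℝ}

open scoped Classical

lemma pr_congr {E F : (α → Bool) → Prop} (h : ∀ g, E g ↔ F g) : pr p E = pr p F := by
  unfold pr
  exact Finset.sum_congr rfl fun g _ => if_congr (h g) rfl rfl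

lemma sum_prod_bool (f : α → Bool → ℝ) :
    ∑ g : α → Bool, ∏ v, f v (g v) = ∏ v, (f v true + f v false) := by
  rw [← Fintype.prod_sum f]
  exact Finset.prod_congr rfl fun v _ => by simp

lemma pr_true : pr p (fun (_ : α → Bool) => True) = 1 := by
  have h : pr p (fun (_ : α → Bool) => True)
      = ∑ g : α → Bool, ∏ v, (fun (_ : α) (b : Bool) => if b = true then p else 1 - p) v (g v) := by
    unfold pr; exact Finset.sum_congr rfl fun g _ => by simp
  rw [h]
  exact (sum_prod_bool (fun (_ : α) (b : Bool) => if b = true then p else 1 - p)).trans (Finset.prod_eq_one fun v _ => by norm_num)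

lemma pr_nonneg (hp0 : 0 ≤ p) (hp1 : p ≤ 1) (E : (α → Bool) → Prop) : 0 ≤ pr p E := by
  unfold pr
  refine Finset.sum_nonneg fun g _ => ?_
  split
  · exact Finset.prod_nonneg fun v _ => by split <;> [exact hp0; linarith]
  · exact le_refl 0


lemma pr_mono (hp0 : 0 ≤ p) (hp1 : p ≤ 1) {E F : (α → Bool) → Prop} (h : ∀ g, E g → F g) :
    pr p E ≤ pr p F := by
  unfold pr
  refine Finset.sum_le_sum fun g _ => ?_
  by_cases hg : E g
  · rw [if_pos hg, if_pos (h g hg)]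
  · rw [if_neg hg]
    split
    · exact Finset.prod_nonneg fun v _ => by split <;> [exact hp0; linarith]
    · exact le_refl 0

lemma pr_le_one (hp0 : 0 ≤ p) (hp1 : p ≤ 1) (E : (α → Bool) → Prop) : pr p E ≤ 1 := by
  have := pr_mono (α := α) hp0 hp1 (F := fun _ => True) (E := E) (fun g _ => trivial)
  rw [pr_true] at this
  exact this

lemma pr_compl (E : (α → Bool) → Prop) : pr p (fun g => ¬ E g) = 1 - pr p E := by
  have h : pr p E + pr p (fun g => ¬E g) = 1 := by
    rw [← pr_true (α := α) (p := p)]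
    unfold pr
    rw [← Finset.sum_add_distrib]
    refine Finset.sum_congr rfl fun g _ => ?_
    by_cases hg : E g <;> simp [hg]
  linarith

lemma pr_allblue (S : Finset α) : pr p (fun g => ∀ v ∈ S, g v = true) = p ^ S.card := by
  have h : pr p (fun g : α → Bool => ∀ v ∈ S, g v = true)
      = ∑ g : α → Bool, ∏ v, (fun (v : α) (b : Bool) =>
          if v ∈ S then (if b = true then p else 0) else (if b = true then p else 1 - p)) v (g v) := by
    unfold pr
    refine Finset.sum_congr rfl fun g _ => ?_
    by_cases hg : ∀ v ∈ S, g v = true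
    · rw [if_pos hg]
      refine Finset.prod_congr rfl fun v _ => ?_
      by_cases hv : v ∈ S
      · simp [hv, hg v hv]
      · simp [hv]
    · rw [if_neg hg]
      push_neg at hg
      obtain ⟨v0, hv0, hgv0⟩ := hg
      refine (Finset.prod_eq_zero (Finset.mem_univ v0) ?_).symm
      simp [hv0, hgv0]
  rw [h, sum_prod_bool (fun (v : α) (b : Bool) =>
    if v ∈ S then (if b = true then p else 0) else (if b = true then p else 1 - p))]
  have h2 : ∀ v : α, (fun (v : α) (b : Bool) =>
          if v ∈ S then (if b = true then p else 0) else (if b = true then p else 1 - p)) v true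
        + (fun (v : α) (b : Bool) =>
          if v ∈ S then (if b = true then p else 0) else (if b = true then p else 1 - p)) v false
      = if v ∈ S then p else 1 := by
    intro v
    by_cases hv : v ∈ S <;> simp [hv]
  rw [Finset.prod_congr rfl fun v _ => h2 v, Finset.prod_ite_mem, Finset.univ_inter,
    Finset.prod_const]

lemma pairs_indicator (g : α → Bool) (T : Finset (α × α)) :
    (∏ q ∈ T, (if g q.1 = true ∧ g q.2 = true then (1:ℝ) else 0))
      = if (∀ q ∈ T, g q.1 = true ∧ g q.2 = true) then 1 else 0 := by
  by_cases h : ∀ q ∈ T, g q.1 = true ∧ g q.2 = true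
  · rw [if_pos h]
    exact Finset.prod_eq_one fun q hq => if_pos (h q hq)
  · rw [if_neg h]
    push_neg at h
    obtain ⟨q, hq, hq2⟩ := h
    exact Finset.prod_eq_zero hq (if_neg (by tauto))

lemma pr_pairsblue (T : Finset (α × α)) (hT1 : ∀ q ∈ T, q.1 ≠ q.2)
    (hT2 : ∀ q ∈ T, ∀ r ∈ T, q ≠ r → q.1 ≠ r.1 ∧ q.1 ≠ r.2 ∧ q.2 ≠ r.1 ∧ q.2 ≠ r.2) :
    pr p (fun g => ∀ q ∈ T, g q.1 = true ∧ g q.2 = true) = p ^ (2 * T.card) := by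
  have hiff : ∀ g : α → Bool, (∀ q ∈ T, g q.1 = true ∧ g q.2 = true)
      ↔ (∀ v ∈ T.biUnion (fun q => ({q.1, q.2} : Finset α)), g v = true) := by
    intro g
    constructor
    · intro h v hv
      rcases Finset.mem_biUnion.1 hv with ⟨q, hq, hv⟩
      rcases Finset.mem_insert.1 hv with h' | h'
      · rw [h']; exact (h q hq).1
      · rw [Finset.mem_singleton.1 h']; exact (h q hq).2
    · intro h q hq
      exact ⟨h q.1 (Finset.mem_biUnion.2 ⟨q, hq, Finset.mem_insert_self _ _⟩),
        h q.2 (Finset.mem_biUnion.2 ⟨q, hq,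
          Finset.mem_insert_of_mem (Finset.mem_singleton_self _)⟩)⟩
  rw [pr_congr hiff, pr_allblue]
  congr 1
  rw [Finset.card_biUnion]
  · rw [Finset.sum_congr rfl (fun q hq => Finset.card_pair (hT1 q hq)), Finset.sum_const,
      smul_eq_mul, mul_comm]
  · intro q hq r hr hne
    have h4 := hT2 q hq r hr hne
    dsimp only [Function.onFun]; rw [Finset.disjoint_left]
    intro a ha ha'
    rcases Finset.mem_insert.1 ha with h' | h' <;> rcases Finset.mem_insert.1 ha' with h'' | h'' <;>
      simp -failIfUnchanged only [Finset.mem_singleton] at * <;> subst h' <;> tauto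

lemma pr_nopair (P : Finset (α × α)) (h1 : ∀ q ∈ P, q.1 ≠ q.2)
    (h2 : ∀ q ∈ P, ∀ r ∈ P, q ≠ r → q.1 ≠ r.1 ∧ q.1 ≠ r.2 ∧ q.2 ≠ r.1 ∧ q.2 ≠ r.2) :
    pr p (fun g => ∀ q ∈ P, ¬(g q.1 = true ∧ g q.2 = true)) = (1 - p ^ 2) ^ P.card := by
  have e1 : pr p (fun g => ∀ q ∈ P, ¬(g q.1 = true ∧ g q.2 = true))
      = ∑ g : α → Bool, (∏ q ∈ P, ((-(if g q.1 = true ∧ g q.2 = true then (1:ℝ) else 0)) + 1)) *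
          ∏ v, (if g v = true then p else 1 - p) := by
    unfold pr
    refine Finset.sum_congr rfl fun g _ => ?_
    by_cases hg : ∀ q ∈ P, ¬(g q.1 = true ∧ g q.2 = true)
    · rw [if_pos hg]
      have hone : (∏ q ∈ P, ((-(if g q.1 = true ∧ g q.2 = true then (1:ℝ) else 0)) + 1)) = 1 :=
        Finset.prod_eq_one fun q hq => by rw [if_neg (hg q hq)]; ring
      rw [hone, one_mul]
    · rw [if_neg hg]
      push_neg at hg
      obtain ⟨q, hq, hq2⟩ := hg
      rw [Finset.prod_eq_zero hq (by rw [if_pos hq2]; ring), zero_mul]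
  have e2 : ∀ g : α → Bool,
      (∏ q ∈ P, ((-(if g q.1 = true ∧ g q.2 = true then (1:ℝ) else 0)) + 1))
      = ∑ T ∈ P.powerset, ∏ q ∈ T, (-(if g q.1 = true ∧ g q.2 = true then (1:ℝ) else 0)) := by
    intro g
    rw [Finset.prod_add]
    exact Finset.sum_congr rfl fun T _ => by rw [Finset.prod_const_one, mul_one]
  rw [e1]
  simp only [e2, Finset.sum_mul]
  rw [Finset.sum_comm]
  have e3 : ∀ T ∈ P.powerset,
      (∑ g : α → Bool, (∏ q ∈ T, (-(if g q.1 = true ∧ g q.2 = true then (1:ℝ) else 0))) *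
        ∏ v, (if g v = true then p else 1 - p)) = (-(p^2)) ^ T.card := by
    intro T hT
    have hsub := Finset.mem_powerset.1 hT
    have key : ∀ g : α → Bool,
        (∏ q ∈ T, (-(if g q.1 = true ∧ g q.2 = true then (1:ℝ) else 0)))
        = (-1 : ℝ)^T.card * (if (∀ q ∈ T, g q.1 = true ∧ g q.2 = true) then 1 else 0) := by
      intro g
      calc (∏ q ∈ T, (-(if g q.1 = true ∧ g q.2 = true then (1:ℝ) else 0)))
          = ∏ q ∈ T, ((-1 : ℝ) * (if g q.1 = true ∧ g q.2 = true then (1:ℝ) else 0)) :=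
            Finset.prod_congr rfl fun _ _ => by ring
        _ = (∏ _q ∈ T, (-1 : ℝ)) * ∏ q ∈ T, (if g q.1 = true ∧ g q.2 = true then (1:ℝ) else 0) :=
            Finset.prod_mul_distrib
        _ = (-1 : ℝ)^T.card * (if (∀ q ∈ T, g q.1 = true ∧ g q.2 = true) then 1 else 0) := by
            rw [Finset.prod_const, pairs_indicator]
    simp only [key, mul_assoc]
    rw [← Finset.mul_sum]
    have e4 : (∑ g : α → Bool, (if (∀ q ∈ T, g q.1 = true ∧ g q.2 = true) then (1:ℝ) else 0) *
        ∏ v, (if g v = true then p else 1 - p)) = p ^ (2 * T.card) := by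
      rw [← pr_pairsblue T (fun q hq => h1 q (hsub hq))
        (fun q hq r hr => h2 q (hsub hq) r (hsub hr))]
      unfold pr
      exact Finset.sum_congr rfl fun g _ => by
        by_cases h : (∀ q ∈ T, g q.1 = true ∧ g q.2 = true) <;> simp [h]
    rw [e4, pow_mul, ← mul_pow]
    congr 1
    ring
  rw [Finset.sum_congr rfl e3]
  have e5 := Finset.prod_add (fun _ : α × α => -(p^2)) (fun _ => (1:ℝ)) P
  simp only [Finset.prod_const, Finset.prod_const_one, one_pow, mul_one] at e5
  rw [← e5]
  congr 1
  ring

end general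

def torusQ (m : ℕ) (g : ZMod m × ZMod m → Bool) : Prop :=
  (∃ x y : ZMod m, g (x, y) = true ∧ g (x + 1, y + 1) = true) ∨
    (∃ x y : ZMod m, g (x, y) = true ∧ g (x - 1, y + 1) = true)

lemma torusQ_step {m : ℕ} {g : ZMod m × ZMod m → Bool} (h : torusQ m g) :
    torusQ m (torusBMajStep m g) := by
  have estep : ∀ v : ZMod m × ZMod m, 2 ≤ vnCount m g v → torusBMajStep m g v = true := by
    intro v hv
    simp [torusBMajStep, hv]
  rcases h with ⟨x, y, h1, h2⟩ | ⟨x, y, h1, h2⟩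
  · refine Or.inr ⟨x + 1, y, estep _ ?_, ?_⟩
    · unfold vnCount
      simp only [add_sub_cancel_right]
      rw [h1, h2]
      simp only [if_true]
      omega
    · rw [add_sub_cancel_right]
      refine estep _ ?_
      unfold vnCount
      simp only [add_sub_cancel_right]
      rw [h2, h1]
      simp only [if_true]
      omega
  · refine Or.inl ⟨x - 1, y, estep _ ?_, ?_⟩
    · unfold vnCount
      simp only [sub_add_cancel, add_sub_cancel_right]
      rw [h1, h2]
      simp only [if_true]
      omega
    · rw [sub_add_cancel]
      refine estep _ ?_
      unfold vnCount
      simp only [sub_add_cancel, add_sub_cancel_right]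
      rw [h2, h1]
      simp only [if_true]
      omega

lemma torusQ_survive {m : ℕ} {g : ZMod m × ZMod m → Bool} (h : torusQ m g) (t : ℕ) :
    ∃ v, (torusBMajStep m)^[t] g v = true := by
  induction t generalizing g with
  | zero =>
    rcases h with ⟨x, y, h1, _⟩ | ⟨x, y, h1, _⟩ <;> exact ⟨(x, y), h1⟩
  | succ t ih =>
    rw [Function.iterate_succ_apply]
    exact ih (torusQ_step h)

-- pairs construction
def diagPairs (n : ℕ) : Finset ((ZMod (n+1) × ZMod (n+1)) × (ZMod (n+1) × ZMod (n+1))) :=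
  (Finset.range ((n+1)/2) ×ˢ Finset.range ((n+1)/2)).image fun ab =>
    ((((2*ab.1 : ℕ) : ZMod (n+1)), ((2*ab.2 : ℕ) : ZMod (n+1))),
     (((2*ab.1+1 : ℕ) : ZMod (n+1)), ((2*ab.2+1 : ℕ) : ZMod (n+1))))

lemma zmod_cast_inj {n a b : ℕ} (ha : a < n+1) (hb : b < n+1)
    (h : (a : ZMod (n+1)) = b) : a = b := by
  have := congrArg ZMod.val h
  rwa [ZMod.val_cast_of_lt ha, ZMod.val_cast_of_lt hb] at this

lemma diagPairs_card (n : ℕ) : (diagPairs n).card = ((n+1)/2)^2 := by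
  rw [diagPairs, Finset.card_image_of_injOn, Finset.card_product, Finset.card_range, sq]
  intro ab hab cd hcd h
  simp only [Finset.mem_coe, Finset.mem_product, Finset.mem_range] at hab hcd
  simp only [Prod.mk.injEq] at h
  have h1 := zmod_cast_inj (by omega) (by omega) h.1.1
  have h2 := zmod_cast_inj (by omega) (by omega) h.1.2
  exact Prod.ext (by omega) (by omega)

lemma diagPairs_ne (n : ℕ) : ∀ q ∈ diagPairs n, q.1 ≠ q.2 := by
  intro q hq
  rw [diagPairs, Finset.mem_image] at hq
  obtain ⟨ab, hab, rfl⟩ := hq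
  simp only [Finset.mem_product, Finset.mem_range] at hab
  intro h
  simp only [Prod.mk.injEq] at h
  have := zmod_cast_inj (n := n) (by omega) (by omega) h.1
  omega

lemma diagPairs_disj (n : ℕ) : ∀ q ∈ diagPairs n, ∀ r ∈ diagPairs n, q ≠ r →
    q.1 ≠ r.1 ∧ q.1 ≠ r.2 ∧ q.2 ≠ r.1 ∧ q.2 ≠ r.2 := by
  intro q hq r hr hne
  rw [diagPairs, Finset.mem_image] at hq hr
  obtain ⟨ab, hab, rfl⟩ := hq
  obtain ⟨cd, hcd, rfl⟩ := hr
  simp only [Finset.mem_product, Finset.mem_range] at hab hcd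
  have hne' : ¬(ab.1 = cd.1 ∧ ab.2 = cd.2) := by
    intro h
    exact hne (by rw [Prod.ext h.1 h.2])
  refine ⟨?_, ?_, ?_, ?_⟩ <;> intro h <;> simp only [Prod.mk.injEq] at h <;>
    [skip; skip; skip; skip] <;>
    exact absurd (And.intro
      (by have := zmod_cast_inj (n := n) (by omega) (by omega) h.1; omega)
      (by have := zmod_cast_inj (n := n) (by omega) (by omega) h.2; omega)) hne'

lemma diagPairs_event (n : ℕ) (g : ZMod (n+1) × ZMod (n+1) → Bool)
    (hF : ¬ ∃ i j : ZMod (n + 1), g (2 * i, 2 * j) = true ∧ g (2 * i + 1, 2 * j + 1) = true) :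
    ∀ q ∈ diagPairs n, ¬(g q.1 = true ∧ g q.2 = true) := by
  intro q hq hgq
  rw [diagPairs, Finset.mem_image] at hq
  obtain ⟨ab, _, rfl⟩ := hq
  refine hF ⟨(ab.1 : ZMod (n+1)), (ab.2 : ZMod (n+1)), ?_, ?_⟩
  · convert hgq.1 using 3 <;> push_cast <;> ring
  · convert hgq.2 using 3 <;> push_cast <;> ring


/-- Biased majority model on the torus with von Neumann neighborhood: if
`p_b = ω(n^{-1})`, then w.h.p. the initial generation contains a diagonal pair
`{(2i,2j), (2i+1,2j+1)}` both of whose cells are blue, and consequently blue survives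
in all subsequent generations. -/
theorem stmt16 (p : ℕ → ℝ) (hp0 : ∀ n, 0 ≤ p n) (hp1 : ∀ n, p n ≤ 1)
    (hbig : Tendsto (fun n : ℕ => p n * (n + 1)) atTop atTop) :
    Tendsto (fun n : ℕ =>
        pr (α := ZMod (n + 1) × ZMod (n + 1)) (p n)
          (fun g =>
            (∃ i j : ZMod (n + 1),
                g (2 * i, 2 * j) = true ∧ g (2 * i + 1, 2 * j + 1) = true) ∧
              ∀ t : ℕ, ∃ v, (torusBMajStep (n + 1))^[t] g v = true))
      atTop (nhds 1) := by
  have main : ∀ n : ℕ,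
      1 - (1 - p n ^ 2) ^ (((n+1)/2)^2) ≤ pr (α := ZMod (n + 1) × ZMod (n + 1)) (p n)
          (fun g =>
            (∃ i j : ZMod (n + 1),
                g (2 * i, 2 * j) = true ∧ g (2 * i + 1, 2 * j + 1) = true) ∧
              ∀ t : ℕ, ∃ v, (torusBMajStep (n + 1))^[t] g v = true)
      ∧ pr (α := ZMod (n + 1) × ZMod (n + 1)) (p n)
          (fun g =>
            (∃ i j : ZMod (n + 1),
                g (2 * i, 2 * j) = true ∧ g (2 * i + 1, 2 * j + 1) = true) ∧
              ∀ t : ℕ, ∃ v, (torusBMajStep (n + 1))^[t] g v = true) ≤ 1 := by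
    intro n
    have hiff : ∀ g : ZMod (n+1) × ZMod (n+1) → Bool,
        ((∃ i j : ZMod (n + 1),
            g (2 * i, 2 * j) = true ∧ g (2 * i + 1, 2 * j + 1) = true) ∧
          ∀ t : ℕ, ∃ v, (torusBMajStep (n + 1))^[t] g v = true)
        ↔ (∃ i j : ZMod (n + 1),
            g (2 * i, 2 * j) = true ∧ g (2 * i + 1, 2 * j + 1) = true) := by
      intro g
      constructor
      · exact fun h => h.1
      · intro h
        refine ⟨h, fun t => ?_⟩
        obtain ⟨i, j, h1, h2⟩ := h
        exact torusQ_survive (Or.inl ⟨2*i, 2*j, h1, h2⟩) t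
    have e : pr (α := ZMod (n + 1) × ZMod (n + 1)) (p n)
          (fun g =>
            (∃ i j : ZMod (n + 1),
                g (2 * i, 2 * j) = true ∧ g (2 * i + 1, 2 * j + 1) = true) ∧
              ∀ t : ℕ, ∃ v, (torusBMajStep (n + 1))^[t] g v = true)
        = pr (α := ZMod (n + 1) × ZMod (n + 1)) (p n)
          (fun g => ∃ i j : ZMod (n + 1),
            g (2 * i, 2 * j) = true ∧ g (2 * i + 1, 2 * j + 1) = true) := pr_congr hiff
    have e2 := pr_compl (α := ZMod (n + 1) × ZMod (n + 1)) (p := p n)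
      (fun g => ∃ i j : ZMod (n + 1),
        g (2 * i, 2 * j) = true ∧ g (2 * i + 1, 2 * j + 1) = true)
    have hnn : 0 ≤ pr (α := ZMod (n + 1) × ZMod (n + 1)) (p n)
        (fun g => ¬ ∃ i j : ZMod (n + 1),
          g (2 * i, 2 * j) = true ∧ g (2 * i + 1, 2 * j + 1) = true) :=
      pr_nonneg (hp0 n) (hp1 n) _
    have hb : pr (α := ZMod (n + 1) × ZMod (n + 1)) (p n)
        (fun g => ¬ ∃ i j : ZMod (n + 1),
          g (2 * i, 2 * j) = true ∧ g (2 * i + 1, 2 * j + 1) = true)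
        ≤ (1 - p n ^ 2) ^ (((n+1)/2)^2) := by
      rw [← diagPairs_card n, ← pr_nopair (diagPairs n) (diagPairs_ne n) (diagPairs_disj n)]
      exact pr_mono (hp0 n) (hp1 n) (fun g hg => diagPairs_event n g hg)
    constructor
    · rw [e]; linarith
    · rw [e]; linarith
  have hA : Tendsto (fun n : ℕ => ((((n+1)/2 : ℕ) : ℝ)) * p n) atTop atTop := by
    have h1 : Tendsto (fun n : ℕ => (p n * (n + 1) + (-1))/2) atTop atTop :=
      (tendsto_atTop_add_const_right atTop (-1) hbig).atTop_div_const (by norm_num)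
    refine tendsto_atTop_mono (fun n => ?_) h1
    have h2A : (n : ℝ) ≤ 2 * (((n+1)/2 : ℕ) : ℝ) := by
      have : (n : ℕ) ≤ 2 * ((n+1)/2) := by omega
      exact_mod_cast this
    nlinarith [hp0 n, hp1 n, mul_le_mul_of_nonneg_right h2A (hp0 n)]
  have hKp : Tendsto (fun n : ℕ => (((((n+1)/2)^2 : ℕ)) : ℝ) * p n ^ 2) atTop atTop := by
    refine (hA.atTop_mul_atTop₀ hA).congr fun n => ?_
    push_cast
    ring
  have hexp : Tendsto (fun n : ℕ =>
      Real.exp (-((((((n+1)/2)^2 : ℕ)) : ℝ) * p n ^ 2))) atTop (nhds 0) :=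
    Real.tendsto_exp_atBot.comp (tendsto_neg_atBot_iff.mpr hKp)
  have h0 : Tendsto (fun n : ℕ => (1 - p n ^ 2) ^ (((n+1)/2)^2)) atTop (nhds 0) := by
    refine squeeze_zero (fun n => pow_nonneg (by nlinarith [hp0 n, hp1 n]) _)
      (fun n => ?_) hexp
    have hle : (1 - p n ^ 2) ≤ Real.exp (-(p n ^ 2)) := by
      have := Real.add_one_le_exp (-(p n ^ 2))
      linarith
    calc (1 - p n ^ 2) ^ (((n+1)/2)^2)
        ≤ (Real.exp (-(p n ^ 2))) ^ (((n+1)/2)^2) :=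
          pow_le_pow_left₀ (by nlinarith [hp0 n, hp1 n]) hle _
      _ = Real.exp (-((((((n+1)/2)^2 : ℕ)) : ℝ) * p n ^ 2)) := by
          rw [← Real.exp_nat_mul]
          congr 1
          push_cast
          ring
  refine tendsto_of_tendsto_of_tendsto_of_le_of_le ?_ tendsto_const_nhds
    (fun n => (main n).1) (fun n => (main n).2)
  have := h0.const_sub 1
  simpa using this
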